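/- arXiv:2003.11125 — 7 statements merged into one kernel-verified Lean document; each statement's English description precedes it below -/
import Mathlib

section
/- Let L be a finite field with 4 elements, and let α ∈ L satisfy α² + α + 1 = 0. Let m ≥ 3 be odd, let a, b : ℕ → F_2, and view F_2 inside L via the unique ring embedding. Define the polynomials p(x) = ∑_{i<m} (a_i + b_i·α) x^i and p̄(x) = ∑_{i<m} (b_i + a_i·α) x^i in L[x]. Then, as polynomials in L[x], p̄(x^{m−1}) = α · p(x^{(m−1)/2})², i.e. the composition of p̄ with x^{m−1} equals α times the square of the composition of p with x^{(m−1)/2}. -/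
open Polynomial

/-- Over `F_4 = F_2[α]` with `α² + α + 1 = 0`, for `m ≥ 3` odd and
`p(x) = ∑_{i<m} (a_i + b_i α) x^i`, `p̄(x) = ∑_{i<m} (b_i + a_i α) x^i`,
one has `p̄(x^{m−1}) = α · p(x^{(m−1)/2})²` as polynomials in `F_4[x]`. -/
theorem binary_companion_formula
    (L : Type*) [Field L] [Fintype L] (hcard : Fintype.card L = 4)
    (α : L) (hα : α ^ 2 + α + 1 = 0)
    (m : ℕ) (hm : 3 ≤ m) (hodd : Odd m)
    (f : ZMod 2 →+* L) (a b : ℕ → ZMod 2) :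
    let p : L[X] := ∑ i ∈ Finset.range m, C (f (a i) + f (b i) * α) * X ^ i
    let pbar : L[X] := ∑ i ∈ Finset.range m, C (f (b i) + f (a i) * α) * X ^ i
    pbar.comp (X ^ (m - 1)) = C α * (p.comp (X ^ ((m - 1) / 2))) ^ 2 := by
  intro p pbar
  haveI : CharP L 2 := charP_of_injective_ringHom f.injective 2
  haveI : Fact (Nat.Prime 2) := ⟨Nat.prime_two⟩
  have h2 : (2 : L) = 0 := by exact_mod_cast CharP.cast_eq_zero L 2
  have hα2 : α ^ 2 = α + 1 := by linear_combination hα - (α + 1) * h2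
  obtain ⟨t, ht⟩ := hodd
  have hk : (m - 1) / 2 = t := by omega
  have hm1 : m - 1 = 2 * t := by omega
  have key : ∀ i : ℕ, f (b i) + f (a i) * α = α * (f (a i) + f (b i) * α) ^ 2 := by
    intro i
    have hA : f (a i) ^ 2 = f (a i) := by
      rw [← map_pow]; congr 1; exact ZMod.pow_card (a i)
    have hB : f (b i) ^ 2 = f (b i) := by
      rw [← map_pow]; congr 1; exact ZMod.pow_card (b i)
    set A := f (a i)
    set B := f (b i)
    linear_combination (-α) * hA + (-B * α ^ 3 + α ^ 3 * (B - 1)) * hB +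
      (-B * α - (2 * A * B + B)) * hα2 + (-(A * B * α + B * α + A * B)) * h2
  simp only [p, pbar, Polynomial.sum_comp, Polynomial.mul_comp, Polynomial.C_comp,
    Polynomial.pow_comp, Polynomial.X_comp, hk, hm1, Nat.mul_div_cancel_left t (by norm_num : 0 < 2)]
  rw [sum_pow_char (p := 2), Finset.mul_sum]
  refine Finset.sum_congr rfl fun i _ => ?_
  rw [key i]
  simp only [map_mul, map_pow, ← pow_mul]
  ring
end

section
/- (BCH bound.) Let E be a field, m ≥ 1, and let ω ∈ E be a primitive m-th root of unity (i.e. ω has multiplicative order exactly m). Let δ, b be integers with 2 ≤ δ ≤ m + 1. Let c ∈ E[x] be a nonzero polynomial with deg c < m such that c(ω^{b+j}) = 0 for all 0 ≤ j ≤ δ − 2. Then c has at least δ nonzero coefficients. -/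
open Polynomial

/-- (BCH bound.) If `ω ∈ E` is a primitive `m`-th root of unity, `2 ≤ δ ≤ m+1`,
and a nonzero polynomial `c` with `deg c < m` vanishes at the `δ − 1`
consecutive powers `ω^b, ω^{b+1}, …, ω^{b+δ−2}`, then `c` has at least `δ`
nonzero coefficients. -/
theorem bch_bound
    (E : Type*) [Field E] (m : ℕ) (hm : 1 ≤ m)
    (ω : E) (hω : orderOf ω = m)
    (δ : ℕ) (b : ℤ) (hδ2 : 2 ≤ δ) (hδm : δ ≤ m + 1)
    (c : E[X]) (hc : c ≠ 0) (hdeg : c.natDegree < m)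
    (hroots : ∀ j : ℕ, j ≤ δ - 2 → c.eval (ω ^ (b + j)) = 0) :
    δ ≤ c.support.card := by
  by_contra hlt
  push_neg at hlt
  set s := c.support with hs
  set n := s.card with hn
  have hn1 : 1 ≤ n := Finset.card_pos.2 (Polynomial.support_nonempty.2 hc)
  have hωm : ω ^ m = 1 := hω ▸ pow_orderOf_eq_one ω
  have hω0 : ω ≠ 0 := by
    intro h
    rw [h, zero_pow (by omega : m ≠ 0)] at hωm
    exact zero_ne_one hωm
  -- enumerate the support
  let g : Fin n ≃o s := s.orderIsoOfFin rfl
  let e : Fin n → ℕ := fun i => (g i : ℕ)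
  have he_mem : ∀ i, e i ∈ s := fun i => (g i).2
  have he_lt : ∀ i, e i < m := fun i =>
    lt_of_le_of_lt (Polynomial.le_natDegree_of_mem_supp _ (he_mem i)) hdeg
  have he_inj : Function.Injective e := fun i j h =>
    g.injective (Subtype.ext h)
  -- injectivity of i ↦ ω ^ e i
  have hf_inj : Function.Injective fun i => ω ^ e i := by
    intro i j h
    apply he_inj
    have := pow_injOn_Iio_orderOf (x := ω)
      (by rw [hω]; exact Set.mem_Iio.2 (he_lt i))
      (by rw [hω]; exact Set.mem_Iio.2 (he_lt j)) h
    exact this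
  -- the key vanishing sums
  have key : ∀ r : Fin n,
      (∑ i : Fin n, (c.coeff (e i) * ω ^ (b * (e i : ℤ))) * (ω ^ e i) ^ (r : ℕ)) = 0 := by
    intro r
    have hr : (r : ℕ) ≤ δ - 2 := by
      have := r.2
      omega
    have h0 := hroots r hr
    rw [Polynomial.eval_eq_sum, Polynomial.sum_def] at h0
    rw [← h0]
    rw [← Finset.sum_coe_sort s (fun k => c.coeff k * (ω ^ (b + (r:ℕ))) ^ k)]
    refine Fintype.sum_equiv g.toEquiv _ _ fun i => ?_
    show c.coeff (e i) * ω ^ (b * (e i : ℤ)) * (ω ^ e i) ^ (r : ℕ)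
      = c.coeff (e i) * (ω ^ (b + (r:ℕ))) ^ (e i)
    have : (ω ^ (b + (r:ℕ))) ^ (e i) = ω ^ (b * (e i : ℤ)) * (ω ^ e i) ^ (r : ℕ) := by
      rw [← zpow_natCast (ω ^ (b + (r:ℕ))) (e i), ← zpow_mul, add_mul, zpow_add₀ hω0]
      congr 1
      rw [mul_comm ((r:ℕ):ℤ) ((e i : ℤ)), zpow_mul, zpow_natCast, zpow_natCast]
    rw [this]; ring
  have hv0 := Matrix.eq_zero_of_forall_pow_sum_mul_pow_eq_zero hf_inj key
  have h0 : c.coeff (e ⟨0, by omega⟩) * ω ^ (b * (e ⟨0, by omega⟩ : ℤ)) = 0 :=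
    congrFun hv0 ⟨0, by omega⟩
  have hcoeff : c.coeff (e ⟨0, by omega⟩) ≠ 0 :=
    Polynomial.mem_support_iff.1 (he_mem _)
  exact (mul_ne_zero hcoeff (zpow_ne_zero _ hω0)) h0
end

section
/- (BCH bound for principal dihedral codes, folded form.) Let L be a field, E a field extension of L, m ≥ 3, and let ω ∈ E be a primitive m-th root of unity. Let δ, b be integers with 2 ≤ δ ≤ m + 1. Let p, P ∈ L[x] be polynomials such that p(ω^{b+j}) = 0 and P(ω^{b+j}) = 0 for all 0 ≤ j ≤ δ − 2 (evaluation via the inclusion L ⊆ E). Then for all t₁, t₂ ∈ L[x], the remainder c of t₁·p + t₂·P upon division by x^m − 1 satisfies: if c ≠ 0 then c has at least δ nonzero coefficients. In particular, the dihedral code generated by p has minimum distance at least δ. -/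
open Polynomial

/-- (BCH bound for principal dihedral codes, folded form.) If `ω ∈ E` is a
primitive `m`-th root of unity, `2 ≤ δ ≤ m+1`, and both `p, P ∈ L[x]` vanish
at the `δ − 1` consecutive powers `ω^b, …, ω^{b+δ−2}` (via `L ⊆ E`), then every
nonzero element `t₁·p + t₂·P mod (x^m − 1)` of the folded code has at least `δ`
nonzero coefficients; hence the dihedral code generated by `p` has minimum
distance at least `δ`. -/
theorem bch_bound_for_principal_dihedral_codes
    (L E : Type*) [Field L] [Field E] [Algebra L E]
    (m : ℕ) (hm : 3 ≤ m)
    (ω : E) (hω : orderOf ω = m)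
    (δ : ℕ) (b : ℤ) (hδ2 : 2 ≤ δ) (hδm : δ ≤ m + 1)
    (p P : L[X])
    (hp : ∀ j : ℕ, j ≤ δ - 2 → Polynomial.aeval (ω ^ (b + j)) p = 0)
    (hP : ∀ j : ℕ, j ≤ δ - 2 → Polynomial.aeval (ω ^ (b + j)) P = 0) :
    ∀ t₁ t₂ : L[X],
      (t₁ * p + t₂ * P) %ₘ (X ^ m - 1) ≠ 0 →
        δ ≤ ((t₁ * p + t₂ * P) %ₘ (X ^ m - 1)).support.card := by
  intro t₁ t₂ hne
  set A : L[X] := t₁ * p + t₂ * P with hA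
  set c : L[X] := A %ₘ (X ^ m - 1) with hcdef
  by_contra hlt
  push_neg at hlt
  have hm0 : 0 < m := by omega
  -- ω ≠ 0
  have hωm : ω ^ m = 1 := by rw [← hω]; exact pow_orderOf_eq_one ω
  have hωne : ω ≠ 0 := by
    intro h
    rw [h, zero_pow hm0.ne'] at hωm
    exact zero_ne_one hωm
  have hmonic : (X ^ m - 1 : L[X]).Monic := by
    simpa using monic_X_pow_sub_C (1 : L) hm0.ne'
  -- every zpow of ω to the m-th power is 1
  have hone : ∀ z : ℤ, (ω ^ z) ^ m = 1 := by
    intro z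
    rw [← zpow_natCast (ω ^ z) m, ← zpow_mul, mul_comm, zpow_mul, zpow_natCast, hωm, one_zpow]
  -- c vanishes at the consecutive powers
  have hc : ∀ j : ℕ, j ≤ δ - 2 → Polynomial.aeval (ω ^ (b + j)) c = 0 := by
    intro j hj
    rw [hcdef, modByMonic_eq_sub_mul_div A (X ^ m - 1)]
    simp only [map_sub, map_mul, map_add, hA, map_pow, aeval_X, aeval_one]
    rw [hp j hj, hP j hj, hone (b + j)]
    ring
  -- degree bound on support
  have hdeglt : c.natDegree < m := by
    have h1 : c.degree < (X ^ m - 1 : L[X]).degree := degree_modByMonic_lt A hmonic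
    have h2 : (X ^ m - 1 : L[X]).degree = m := by
      simpa using degree_X_pow_sub_C hm0 (1 : L)
    rw [h2] at h1
    exact (natDegree_lt_iff_degree_lt hne).2 h1
  have hsupp : ∀ i ∈ c.support, i < m := fun i hi =>
    lt_of_le_of_lt (le_natDegree_of_mem_supp i hi) hdeglt
  -- set up indexing of support
  set s : ℕ := c.support.card with hs
  set e := c.support.equivFin with he
  set g : Fin s → ℕ := fun k => (e.symm k : ℕ) with hg
  have hgmem : ∀ k, g k ∈ c.support := fun k => (e.symm k).2
  have hginj : Function.Injective g := by
    intro k₁ k₂ h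
    have : (e.symm k₁ : c.support) = e.symm k₂ := Subtype.ext h
    exact e.symm.injective this
  set x : Fin s → E := fun k => ω ^ (g k) with hx
  have hxne : ∀ k, x k ≠ 0 := fun k => pow_ne_zero _ hωne
  have hxinj : Function.Injective x := by
    intro k₁ k₂ h
    have h' : ω ^ (g k₁) = ω ^ (g k₂) := by simpa [hx] using h
    apply hginj
    by_contra hne'
    rcases lt_or_gt_of_ne hne' with hlt' | hlt'
    · have h2 : ω ^ (g k₁) * ω ^ (g k₂ - g k₁) = ω ^ (g k₁) * 1 := by
        rw [mul_one, ← pow_add]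
        rw [h']; congr 1; omega
      have h1 : ω ^ (g k₂ - g k₁) = 1 :=
        mul_left_cancel₀ (pow_ne_zero _ hωne) h2
      have := orderOf_le_of_pow_eq_one (by omega : 0 < g k₂ - g k₁) h1
      rw [hω] at this
      have := hsupp _ (hgmem k₂)
      omega
    · have h2 : ω ^ (g k₂) * ω ^ (g k₁ - g k₂) = ω ^ (g k₂) * 1 := by
        rw [mul_one, ← pow_add]
        rw [← h']; congr 1; omega
      have h1 : ω ^ (g k₁ - g k₂) = 1 :=
        mul_left_cancel₀ (pow_ne_zero _ hωne) h2
      have := orderOf_le_of_pow_eq_one (by omega : 0 < g k₁ - g k₂) h1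
      rw [hω] at this
      have := hsupp _ (hgmem k₁)
      omega
  -- the matrix
  set M : Matrix (Fin s) (Fin s) E :=
    Matrix.of (fun j k => x k ^ b * x k ^ (j : ℕ)) with hM
  have hdet : M.det ≠ 0 := by
    have h1 : M = Matrix.of (fun j k => (fun l => x l ^ b) k * Matrix.transpose (Matrix.vandermonde x) j k) := by
      ext j k
      simp [hM, Matrix.vandermonde]
    rw [h1, Matrix.det_mul_row, Matrix.det_transpose]
    refine mul_ne_zero (Finset.prod_ne_zero_iff.2 fun k _ => ?_) ?_
    · exact zpow_ne_zero _ (hxne k)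
    · exact Matrix.det_vandermonde_ne_zero_iff.2 hxinj
  -- the coefficient vector
  set v : Fin s → E := fun k => algebraMap L E (c.coeff (g k)) with hv
  have hmul : M.mulVec v = 0 := by
    funext j
    have hj : (j : ℕ) ≤ δ - 2 := by
      have := j.2
      omega
    have h0 := hc j hj
    -- rewrite aeval as a sum over the support
    have hsum : Polynomial.aeval (ω ^ (b + (j : ℕ))) c =
        ∑ i ∈ c.support, algebraMap L E (c.coeff i) * (ω ^ (b + (j : ℕ))) ^ i := by
      rw [aeval_def, eval₂_eq_sum, Polynomial.sum_def]
    rw [hsum] at h0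
    -- convert to a sum over Fin s
    have hsum2 : ∑ i ∈ c.support, algebraMap L E (c.coeff i) * (ω ^ (b + (j : ℕ))) ^ i =
        ∑ k : Fin s, algebraMap L E (c.coeff (g k)) * (ω ^ (b + (j : ℕ))) ^ (g k) := by
      rw [← Finset.sum_attach c.support
        (fun i => algebraMap L E (c.coeff i) * (ω ^ (b + (j : ℕ))) ^ i)]
      exact (Equiv.sum_comp e.symm _).symm
    rw [hsum2] at h0
    have hterm : ∀ k : Fin s, (ω ^ (b + (j : ℕ))) ^ (g k) = x k ^ b * x k ^ (j : ℕ) := by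
      intro k
      simp only [hx]
      have e1 : (ω ^ (g k)) ^ b = ω ^ ((g k : ℤ) * b) := by
        rw [← zpow_natCast ω (g k), ← zpow_mul]
      have e2 : (ω ^ (g k)) ^ (j : ℕ) = ω ^ ((g k : ℤ) * ((j : ℕ) : ℤ)) := by
        rw [← pow_mul, ← zpow_natCast ω (g k * (j : ℕ))]
        norm_cast
      have e3 : (ω ^ (b + ((j : ℕ) : ℤ))) ^ (g k) = ω ^ ((b + ((j : ℕ) : ℤ)) * (g k : ℤ)) := by
        rw [← zpow_natCast (ω ^ (b + ((j : ℕ) : ℤ))) (g k), ← zpow_mul]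
      rw [e3, e1, e2, ← zpow_add₀ hωne]
      congr 1
      ring
    simp only [Matrix.mulVec, dotProduct, hM, hv, Matrix.of_apply, Pi.zero_apply]
    rw [← h0]
    refine Finset.sum_congr rfl fun k _ => ?_
    rw [hterm k]
    ring
  have hv0 : v = 0 := Matrix.eq_zero_of_mulVec_eq_zero hdet hmul
  -- contradiction: c has a nonzero coefficient
  have hsuppne : c.support.Nonempty := nonempty_support_iff.2 hne
  obtain ⟨i, hi⟩ := hsuppne
  have hk : g (e ⟨i, hi⟩) = i := by
    rw [hg]
    simp
  have := congrFun hv0 (e ⟨i, hi⟩)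
  rw [hv] at this
  simp only [hk, Pi.zero_apply] at this
  have : c.coeff i = 0 := by
    have hinj := (algebraMap L E).injective
    exact hinj (by simpa using this)
  exact (mem_support_iff.1 hi) this
end

section
/- Let m ≥ 3 be an odd integer and let c = (m−1)/2 viewed as an element of Z/mZ. For i ∈ Z/mZ let C_i = { 4^k · i : k ∈ ℕ } ⊆ Z/mZ be the 4-cyclotomic coset of i. Then the following are equivalent: (i) c·C_i = C_i for all i ∈ Z/mZ (equivalently, C_{c·i} = C_i for all i); (ii) there exists an integer s ≥ 0 such that 2^{2s+1} ≡ −1 (mod m). -/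
/-- For `m ≥ 3` odd and `c = (m−1)/2 ∈ Z/mZ`, the multiplication-by-`c` map
stabilises every 4-cyclotomic coset `C_i = {4^k·i : k ∈ ℕ}` if and only if
there exists `s ≥ 0` with `2^{2s+1} ≡ −1 (mod m)`. -/
theorem cyclotomic_cosets_stable_iff_power_of_two
    (m : ℕ) (hm : 3 ≤ m) (hodd : Odd m) :
    (∀ i : ZMod m,
        (fun x : ZMod m => (((m - 1) / 2 : ℕ) : ZMod m) * x) ''
            {x : ZMod m | ∃ k : ℕ, x = 4 ^ k * i} =
          {x : ZMod m | ∃ k : ℕ, x = 4 ^ k * i}) ↔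
      (∃ s : ℕ, (2 : ZMod m) ^ (2 * s + 1) = -1) := by
  haveI : NeZero m := ⟨by omega⟩
  set c : ZMod m := (((m - 1) / 2 : ℕ) : ZMod m) with hc
  -- 2 ∣ m - 1
  have hdvd : 2 ∣ m - 1 := by
    obtain ⟨t, ht⟩ := hodd; omega
  have hmul : (m - 1) / 2 * 2 = m - 1 := Nat.div_mul_cancel hdvd
  have hm1 : ((m - 1 : ℕ) : ZMod m) = -1 := by
    rw [Nat.cast_sub (by omega : 1 ≤ m), ZMod.natCast_self]
    ring
  have h2c : c * 2 = -1 := by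
    have : (((m - 1) / 2 * 2 : ℕ) : ZMod m) = -1 := by rw [hmul, hm1]
    rwa [Nat.cast_mul, Nat.cast_ofNat] at this
  have hcop : Nat.Coprime 2 m := by
    exact Nat.coprime_two_left.mpr hodd
  have h2u : IsUnit (2 : ZMod m) := by
    have := (ZMod.isUnit_iff_coprime 2 m).mpr hcop
    simpa using this
  have h4u : IsUnit (4 : ZMod m) := by
    have : (4 : ZMod m) = 2 * 2 := by norm_num
    rw [this]; exact h2u.mul h2u
  constructor
  · intro h
    have h1 := h 1
    have hmem : c ∈ {x : ZMod m | ∃ k : ℕ, x = 4 ^ k * 1} := by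
      rw [← h1]
      exact ⟨1, ⟨0, by simp⟩, by simp⟩
    obtain ⟨k, hk⟩ := hmem
    refine ⟨k, ?_⟩
    have : (2 : ZMod m) ^ (2 * k + 1) = 4 ^ k * 2 := by
      rw [pow_succ, pow_mul]; norm_num
    rw [this, ← mul_one ((4 : ZMod m) ^ k), ← hk, h2c]
  · rintro ⟨s, hs⟩
    -- c = 4 ^ s
    have hc4 : c = 4 ^ s := by
      have h1 : c * 2 = 4 ^ s * 2 := by
        rw [h2c, ← hs, pow_succ, pow_mul]; norm_num
      exact h2u.mul_right_cancel h1
    obtain ⟨u, hu⟩ := h4u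
    have hdpos : 0 < orderOf u := orderOf_pos u
    have hd : (4 : ZMod m) ^ orderOf u = 1 := by
      rw [← hu, ← Units.val_pow_eq_pow_val, pow_orderOf_eq_one, Units.val_one]
    set d := orderOf u with hdef
    obtain ⟨e, he⟩ : ∃ e, d = e + 1 := ⟨d - 1, by omega⟩
    intro i
    ext x
    simp only [Set.mem_image, Set.mem_setOf_eq]
    constructor
    · rintro ⟨y, ⟨k, rfl⟩, rfl⟩
      exact ⟨s + k, by rw [hc4, pow_add]; ring⟩
    · rintro ⟨k, rfl⟩
      refine ⟨4 ^ (s * e + k) * i, ⟨s * e + k, rfl⟩, ?_⟩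
      rw [hc4, ← mul_assoc, ← pow_add]
      have hexp : s + (s * e + k) = d * s + k := by rw [he]; ring
      rw [hexp, pow_add, pow_mul, hd, one_pow, one_mul]
end

section
/- Let L be a finite field with 4 elements, let E be a finite field extension of L, let m ≥ 3 be odd, and let ω ∈ E have multiplicative order exactly m. For i ∈ ℕ let Z_i = { x ∈ E : M_{ω^i}(x) = 0 } be the set of roots in E of the minimal polynomial M_{ω^i} of ω^i over L. Then the following are equivalent: (i) for every i, the image of Z_i under the map x ↦ x^{(m−1)/2} equals Z_i; (ii) there exists an integer s ≥ 0 such that 2^{2s+1} ≡ −1 (mod m). -/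
open Polynomial IntermediateField

section Aux

variable {L E : Type*} [Field L] [Field E] [Algebra L E] [Fintype L] [Fintype E]

lemma charE2 (hcard : Fintype.card L = 4) : CharP E 2 := by
  have h4 : ((4 : ℕ) : L) = 0 := by
    rw [← hcard]; exact FiniteField.cast_card_eq_zero L
  have hdvd : ringChar L ∣ 4 := ringChar.dvd h4
  have hp : Nat.Prime (ringChar L) := CharP.char_is_prime L (ringChar L)
  have h2 : ringChar L = 2 := by
    have hd2 : ringChar L ∣ 2 ^ 2 := by norm_num; exact hdvd
    exact (Nat.prime_dvd_prime_iff_eq hp Nat.prime_two).mp (hp.dvd_of_dvd_pow hd2)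
  haveI : CharP L 2 := h2 ▸ ringChar.charP L
  exact charP_of_injective_algebraMap (algebraMap L E).injective 2

noncomputable def frob4 (hcard : Fintype.card L = 4) : E →ₐ[L] E where
  toFun x := x ^ 4
  map_one' := one_pow 4
  map_mul' a b := mul_pow a b 4
  map_zero' := zero_pow (by norm_num)
  map_add' a b := by
    haveI := charE2 (L := L) (E := E) hcard
    haveI : Fact (Nat.Prime 2) := ⟨Nat.prime_two⟩
    have := add_pow_char_pow (R := E) (p := 2) (n := 2) (x := a) (y := b)
    norm_num at this
    exact this
  commutes' a := by
    rw [← map_pow]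
    congr 1
    have := FiniteField.pow_card a
    rwa [hcard] at this

lemma frob4_apply (hcard : Fintype.card L = 4) (x : E) :
    frob4 (L := L) (E := E) hcard x = x ^ 4 := rfl

lemma frob4_pow_apply (hcard : Fintype.card L = 4) (k : ℕ) (x : E) :
    ((frob4 (L := L) (E := E) hcard) ^ k) x = x ^ 4 ^ k := by
  induction k with
  | zero => simp
  | succ n ih =>
    rw [pow_succ', AlgHom.mul_apply, ih, frob4_apply, ← pow_mul, ← pow_succ]

lemma aeval_minpoly_eq_zero_iff (hcard : Fintype.card L = 4) (y x : E) :
    (Polynomial.aeval x) (minpoly L y) = 0 ↔ ∃ k : ℕ, x = y ^ 4 ^ k := by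
  classical
  have hint : IsIntegral L y := IsIntegral.of_finite L y
  set p := minpoly L y with hp
  set d := p.natDegree with hd
  have hd1 : 1 ≤ d := minpoly.natDegree_pos hint
  -- every Frobenius-power of y is a root
  have hroots : ∀ k : ℕ, (Polynomial.aeval (y ^ 4 ^ k)) p = 0 := by
    intro k
    have h0 : (Polynomial.aeval y) p = 0 := minpoly.aeval L y
    have h1 := Polynomial.aeval_algHom_apply ((frob4 (L := L) (E := E) hcard) ^ k) y p
    rw [frob4_pow_apply, h0, map_zero] at h1
    exact h1
  constructor
  · intro hx
    -- the field L⟮y⟯ has 4^d elements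
    let F := L⟮y⟯
    letI : Fintype F := Fintype.ofFinite F
    have hrank : Module.finrank L F = d := IntermediateField.adjoin.finrank hint
    have hcardF : Fintype.card F = 4 ^ d := by
      rw [Module.card_eq_pow_finrank (K := L) (V := F), hcard, hrank]
    -- step 1 : y ^ 4 ^ d = y
    have hyd : y ^ 4 ^ d = y := by
      have hmem : y ∈ F := IntermediateField.mem_adjoin_simple_self L y
      have h1 : (⟨y, hmem⟩ : F) ^ 4 ^ d = ⟨y, hmem⟩ := by
        rw [← hcardF]; exact FiniteField.pow_card _
      have h2 := congrArg Subtype.val h1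
      simpa using h2
    -- step 2 : if y ^ 4 ^ t = y with 1 ≤ t then d ≤ t
    have hstep2 : ∀ t : ℕ, 1 ≤ t → y ^ 4 ^ t = y → d ≤ t := by
      intro t ht hyt
      by_contra hlt
      push_neg at hlt
      set σ := (frob4 (L := L) (E := E) hcard) ^ t with hσ
      have hσy : σ y = y := by rw [hσ, frob4_pow_apply]; exact hyt
      have hfix : ∀ a : E, a ∈ F → a ^ 4 ^ t = a := by
        intro a ha
        have hsub : Algebra.adjoin L {y} ≤ AlgHom.equalizer σ (AlgHom.id L E) := by
          apply Algebra.adjoin_le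
          intro z hz
          rw [Set.mem_singleton_iff] at hz
          rw [hz]
          exact hσy
        have ha' : a ∈ Algebra.adjoin L {y} := by
          have := IntermediateField.adjoin_simple_toSubalgebra_of_isAlgebraic hint.isAlgebraic
          rw [← this]
          exact ha
        have hme : σ a = a := hsub ha'
        rwa [hσ, frob4_pow_apply] at hme
      -- counting roots of X^(4^t) - X
      set q : E[X] := X ^ 4 ^ t - X with hq
      have hdq : q.natDegree = 4 ^ t := by
        rw [hq]
        have hlt1 : (X : E[X]).natDegree < (X ^ 4 ^ t : E[X]).natDegree := by
          rw [natDegree_X, natDegree_X_pow]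
          exact Nat.one_lt_pow (by omega) (by norm_num)
        rw [natDegree_sub_eq_left_of_natDegree_lt hlt1, natDegree_X_pow]
      have hq0 : q ≠ 0 := by
        intro h
        rw [h, natDegree_zero] at hdq
        have : (0:ℕ) < 4 ^ t := by positivity
        omega
      have hinj : Function.Injective (fun a : F => (⟨a.1, by
          rw [Multiset.mem_toFinset, mem_roots hq0]
          show q.eval a.1 = 0
          rw [hq]
          simp [hfix a.1 a.2]⟩ : q.roots.toFinset)) := by
        intro a b hab
        have h := congrArg (fun z : {u // u ∈ q.roots.toFinset} => z.1) hab
        exact Subtype.ext h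
      have hle : Fintype.card F ≤ q.roots.toFinset.card := by
        have := Fintype.card_le_of_injective _ hinj
        rwa [Fintype.card_coe] at this
      have hle2 : q.roots.toFinset.card ≤ 4 ^ t :=
        le_trans (Multiset.toFinset_card_le _) (hdq ▸ card_roots' q)
      rw [hcardF] at hle
      have : (4:ℕ) ^ d ≤ 4 ^ t := le_trans hle hle2
      have hdt : d ≤ t := (Nat.pow_le_pow_iff_right (by norm_num)).mp this
      omega
    -- step 3 : the roots of (minpoly) are exactly the orbit
    have key : ∀ j k : ℕ, j ≤ k → k < d → y ^ 4 ^ j = y ^ 4 ^ k → j = k := by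
      intro j k hjk hkd hEq
      have hinj : Function.Injective ((frob4 (L := L) (E := E) hcard) ^ j : E →ₐ[L] E) :=
        RingHom.injective ((frob4 (L := L) (E := E) hcard) ^ j : E →ₐ[L] E).toRingHom
      have h1 : y ^ 4 ^ (k - j) = y := by
        apply hinj
        rw [frob4_pow_apply, frob4_pow_apply, ← pow_mul, ← pow_add, Nat.sub_add_cancel hjk]
        exact hEq.symm
      by_contra hne
      have h2 : 1 ≤ k - j := by omega
      have := hstep2 (k - j) h2 h1
      omega
    set pm := p.map (algebraMap L E) with hpm
    have hpm0 : pm ≠ 0 := Polynomial.map_ne_zero (minpoly.ne_zero hint)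
    have hdpm : pm.natDegree = d := by rw [hpm, Polynomial.natDegree_map]
    have hxroot : x ∈ pm.roots.toFinset := by
      rw [Multiset.mem_toFinset, mem_roots hpm0]
      show pm.eval x = 0
      rw [hpm, Polynomial.eval_map, ← Polynomial.aeval_def]
      exact hx
    set O : Finset E := (Finset.range d).image (fun k => y ^ 4 ^ k) with hO
    have hOS : O ⊆ pm.roots.toFinset := by
      intro z hz
      rw [hO, Finset.mem_image] at hz
      obtain ⟨k, _, rfl⟩ := hz
      rw [Multiset.mem_toFinset, mem_roots hpm0]
      show pm.eval (y ^ 4 ^ k) = 0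
      rw [hpm, Polynomial.eval_map, ← Polynomial.aeval_def]
      exact hroots k
    have hOcard : O.card = d := by
      rw [hO, Finset.card_image_of_injOn, Finset.card_range]
      intro a ha b hb hab
      simp only [Finset.coe_range, Set.mem_Iio] at ha hb
      rcases le_total a b with h | h
      · exact key a b h hb hab
      · exact (key b a h ha hab.symm).symm
    have hScard : pm.roots.toFinset.card ≤ d :=
      le_trans (Multiset.toFinset_card_le _) (hdpm ▸ card_roots' pm)
    have hSO : O = pm.roots.toFinset :=
      Finset.eq_of_subset_of_card_le hOS (by rw [hOcard]; exact hScard)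
    rw [← hSO, hO, Finset.mem_image] at hxroot
    obtain ⟨k, _, hk⟩ := hxroot
    exact ⟨k, hk.symm⟩
  · rintro ⟨k, rfl⟩
    exact hroots k

end Aux

/-- For `L = F_4`, `ω` of multiplicative order `m` (`m ≥ 3` odd) in a finite
extension `E`, and `Z_i` the set of roots in `E` of the minimal polynomial of
`ω^i` over `L`, the map `x ↦ x^{(m−1)/2}` stabilises every `Z_i` if and only if
there exists `s ≥ 0` with `2^{2s+1} ≡ −1 (mod m)`. -/
theorem roots_stable_under_half_power_iff
    (L E : Type*) [Field L] [Field E] [Algebra L E]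
    [Fintype L] [Fintype E] (hcard : Fintype.card L = 4)
    (m : ℕ) (hm : 3 ≤ m) (hodd : Odd m)
    (ω : E) (hω : orderOf ω = m) :
    (∀ i : ℕ,
        (fun x : E => x ^ ((m - 1) / 2)) ''
            {x : E | Polynomial.aeval x (minpoly L (ω ^ i)) = 0} =
          {x : E | Polynomial.aeval x (minpoly L (ω ^ i)) = 0}) ↔
      (∃ s : ℕ, (2 : ZMod m) ^ (2 * s + 1) = -1) := by
  classical
  haveI : NeZero m := ⟨by omega⟩
  set e := (m - 1) / 2 with he
  have h2e : 2 * e = m - 1 := by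
    obtain ⟨j, hj⟩ := hodd; omega
  have hcast : ((m - 1 : ℕ) : ZMod m) = -1 := by
    rw [Nat.cast_sub (by omega : 1 ≤ m)]
    simp
  have h2e' : (2 : ZMod m) * ((e : ℕ) : ZMod m) = -1 := by
    have h := congrArg (fun n : ℕ => (n : ZMod m)) h2e
    rw [hcast] at h
    push_cast at h
    exact h
  have hω0 : ω ≠ 0 := by
    intro h
    rw [h] at hω
    have h1 := pow_orderOf_eq_one (0 : E)
    rw [hω, zero_pow (by omega : m ≠ 0)] at h1
    exact zero_ne_one h1
  have hωpow : ∀ a b : ℕ, ω ^ a = ω ^ b ↔ ((a : ZMod m) = (b : ZMod m)) := by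
    intro a b
    set u : Eˣ := Units.mk0 ω hω0 with hudef
    have hord : orderOf u = m := by rw [← hω, ← orderOf_units]; rfl
    have hcoe : ∀ n : ℕ, ((u ^ n : Eˣ) : E) = ω ^ n := by
      intro n; rw [Units.val_pow_eq_pow_val]; rfl
    constructor
    · intro h
      have hu2 : u ^ a = u ^ b := Units.ext (by rw [hcoe, hcoe]; exact h)
      have hmod := pow_eq_pow_iff_modEq.mp hu2
      rw [hord] at hmod
      exact (ZMod.natCast_eq_natCast_iff a b m).mpr hmod
    · intro h
      have hmod := (ZMod.natCast_eq_natCast_iff a b m).mp h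
      have hu2 : u ^ a = u ^ b := pow_eq_pow_iff_modEq.mpr (by rw [hord]; exact hmod)
      rw [← hcoe, ← hcoe, hu2]
  have hZ : ∀ i : ℕ, {x : E | Polynomial.aeval x (minpoly L (ω ^ i)) = 0}
      = {x : E | ∃ k : ℕ, x = (ω ^ i) ^ 4 ^ k} := by
    intro i
    ext x
    exact aeval_minpoly_eq_zero_iff hcard (ω ^ i) x
  simp only [hZ]
  constructor
  · intro H
    have h1 := H 1
    have hmem : ω ^ e ∈ (fun x : E => x ^ e) '' {x : E | ∃ k : ℕ, x = (ω ^ 1) ^ 4 ^ k} :=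
      ⟨ω, ⟨0, by simp⟩, rfl⟩
    rw [h1] at hmem
    obtain ⟨k, hk⟩ := hmem
    rw [pow_one] at hk
    have hek := (hωpow e (4 ^ k)).mp hk
    refine ⟨k, ?_⟩
    have hcv : (((4:ℕ) ^ k : ℕ) : ZMod m) = (2 : ZMod m) ^ (2 * k) := by
      push_cast
      rw [show (4 : ZMod m) = 2 ^ 2 by norm_num, ← pow_mul]
      all_goals ring
    calc (2 : ZMod m) ^ (2 * k + 1) = 2 * (((4:ℕ) ^ k : ℕ) : ZMod m) := by rw [hcv]; ring
      _ = 2 * ((e : ℕ) : ZMod m) := by rw [← hek]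
      _ = -1 := h2e'
  · rintro ⟨s, hs⟩
    have hunit2 : IsUnit (2 : ZMod m) := by
      have h := (ZMod.isUnit_iff_coprime 2 m).mpr hodd.coprime_two_left
      simpa using h
    have he4 : ((e : ℕ) : ZMod m) = (4 : ZMod m) ^ s := by
      apply hunit2.mul_left_cancel
      rw [h2e', ← hs]
      push_cast
      rw [show (4 : ZMod m) = 2 ^ 2 by norm_num, ← pow_mul]
      all_goals ring
    have hunit4 : IsUnit ((4 : ℕ) : ZMod m) := by
      apply (ZMod.isUnit_iff_coprime 4 m).mpr
      have h2 : Nat.Coprime 2 m := hodd.coprime_two_left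
      have := Nat.Coprime.pow_left 2 h2
      simpa using this
    obtain ⟨u, hu⟩ := hunit4
    set r := Nat.totient m with hrdef
    have hr : ((4 : ℕ) : ZMod m) ^ r = 1 := by
      rw [← hu, ← Units.val_pow_eq_pow_val, ZMod.pow_totient, Units.val_one]
    have hr' : (4 : ZMod m) ^ r = 1 := by simpa using hr
    have hr1 : 1 ≤ r := Nat.totient_pos.mpr (by omega)
    intro i
    ext x
    simp only [Set.mem_image, Set.mem_setOf_eq]
    constructor
    · rintro ⟨z, ⟨k, rfl⟩, rfl⟩
      refine ⟨k + s, ?_⟩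
      simp only [← pow_mul]
      rw [hωpow]
      push_cast
      rw [he4]
      ring
    · rintro ⟨k, rfl⟩
      refine ⟨(ω ^ i) ^ 4 ^ (k + s * (r - 1)), ⟨k + s * (r - 1), rfl⟩, ?_⟩
      simp only [← pow_mul]
      rw [hωpow]
      push_cast
      rw [he4]
      have harith : k + s * (r - 1) + s = k + s * r := by
        have h1 : r - 1 + 1 = r := Nat.sub_add_cancel hr1
        calc k + s * (r - 1) + s = k + s * (r - 1 + 1) := by ring
          _ = k + s * r := by rw [h1]
      have hpow : (4 : ZMod m) ^ (k + s * (r - 1)) * (4 : ZMod m) ^ s = 4 ^ k := by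
        rw [← pow_add, harith, pow_add, mul_comm s r, pow_mul, hr', one_pow, mul_one]
      calc (i : ZMod m) * 4 ^ (k + s * (r - 1)) * 4 ^ s
          = (i : ZMod m) * ((4 : ZMod m) ^ (k + s * (r - 1)) * 4 ^ s) := by ring
        _ = (i : ZMod m) * 4 ^ k := by rw [hpow]
end

section
/- Let L be a finite field with 4 elements, let E be a finite field extension of L, let m ≥ 3 be odd, and let ω ∈ E have multiplicative order exactly m. Suppose there exists an integer s ≥ 0 with 2^{2s+1} ≡ −1 (mod m). Let b ≥ 0 and δ ≥ 2 be integers and set p = lcm{ M_{ω^b}, M_{ω^{b+1}}, …, M_{ω^{b+δ−2}} } ∈ L[x], where M_{ω^j} is the minimal polynomial of ω^j over L. Then p divides ( p(x^{(m−1)/2}) )² in L[x], i.e. p divides the square of the composition of p with x^{(m−1)/2}. (Equivalently, every root of p is a root of p̄(x^{m−1}) = α·p(x^{(m−1)/2})², so p divides p̄(x^{m−1}).) -/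
open Polynomial

/-- If there exists `s` with `2^{2s+1} ≡ −1 (mod m)`, then the generator
`p = lcm{M_{ω^b}, …, M_{ω^{b+δ−2}}}` of a binary BCH-dihedral code divides
`(p(x^{(m−1)/2}))²` in `F_4[x]` (equivalently, `p` divides its companion
`p̄(x^{m−1}) = α·p(x^{(m−1)/2})²`). -/
theorem bch_generator_divides_companion
    (L E : Type*) [Field L] [Field E] [Algebra L E] [DecidableEq L]
    [Fintype L] [Fintype E] (hcard : Fintype.card L = 4)
    (m : ℕ) (hm : 3 ≤ m) (hodd : Odd m)
    (ω : E) (hω : orderOf ω = m)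
    (hs : ∃ s : ℕ, (2 : ZMod m) ^ (2 * s + 1) = -1)
    (b : ℕ) (δ : ℕ) (hδ : 2 ≤ δ)
    (p : L[X])
    (hp : p = (Finset.range (δ - 1)).lcm (fun j => minpoly L (ω ^ (b + j)))) :
    p ∣ (p.comp (X ^ ((m - 1) / 2))) ^ 2 := by
  obtain ⟨s, hs⟩ := hs
  set k : ℕ := (m - 1) / 2 with hkdef
  -- characteristic 2
  have hcharL : CharP L 2 := by
    have h4 : ((4 : ℕ) : L) = 0 := by
      have := FiniteField.cast_card_eq_zero L
      rwa [hcard] at this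
    haveI := ringChar.charP L
    have hp2 : (ringChar L).Prime := CharP.char_is_prime L (ringChar L)
    have hdvd : ringChar L ∣ 2 ^ 2 := by
      have := ringChar.dvd h4
      norm_num at this ⊢
      exact this
    have : ringChar L = 2 :=
      (Nat.prime_dvd_prime_iff_eq hp2 Nat.prime_two).mp (hp2.dvd_of_dvd_pow hdvd)
    exact ringChar.of_eq this
  haveI := hcharL
  haveI hcharE : CharP E 2 := charP_of_injective_algebraMap (algebraMap L E).injective 2
  haveI : ExpChar E 2 := .prime Nat.prime_two
  -- every element of L is fixed by x ↦ x^(4^s)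
  have hL4' : ∀ (n : ℕ) (r : L), r ^ (4 : ℕ) ^ n = r := by
    intro n
    induction n with
    | zero => simp
    | succ n ih =>
        intro r
        rw [pow_succ, pow_mul, ih, ← hcard, FiniteField.pow_card]
  have hL4 : ∀ r : L, r ^ (2 ^ (2 * s)) = r := by
    intro r
    have h24 : (2 : ℕ) ^ (2 * s) = 4 ^ s := by rw [pow_mul]; norm_num
    rw [h24]; exact hL4' s r
  -- the Frobenius x ↦ x^(4^s) as an L-algebra map
  let ψ : E →ₐ[L] E :=
    { iterateFrobenius E 2 (2 * s) with
      commutes' := fun r => by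
        show iterateFrobenius E 2 (2 * s) (algebraMap L E r) = algebraMap L E r
        rw [iterateFrobenius_def, ← map_pow, hL4] }
  have hψ : ∀ x : E, ψ x = x ^ (2 ^ (2 * s)) := fun x => rfl
  -- k ≡ 2^(2s)  (mod m)
  have hkmod : k ≡ 2 ^ (2 * s) [MOD m] := by
    have : ((k : ℕ) : ZMod m) = ((2 ^ (2 * s) : ℕ) : ZMod m) := by
      push_cast
      have hu : IsUnit (2 : ZMod m) :=
        (ZMod.isUnit_iff_coprime 2 m).mpr (Nat.coprime_two_left.mpr hodd)
      apply hu.mul_left_cancel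
      have h2k : 2 * k = m - 1 := by
        obtain ⟨t, ht⟩ := hodd
        omega
      have hleft : (2 : ZMod m) * (k : ℕ) = -1 := by
        have : ((2 * k : ℕ) : ZMod m) = ((m - 1 : ℕ) : ZMod m) := by rw [h2k]
        push_cast at this
        rw [this, Nat.cast_sub (by omega : 1 ≤ m)]
        simp
      have hright : (2 : ZMod m) * (2 : ZMod m) ^ (2 * s) = -1 := by
        rw [← pow_succ']
        exact hs
      rw [hleft, hright]
    exact (ZMod.natCast_eq_natCast_iff _ _ _).mp this
  subst hp
  apply Finset.lcm_dvd
  intro j hj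
  set θ : E := ω ^ (b + j) with hθ
  have hPθ : (aeval θ) ((Finset.range (δ - 1)).lcm (fun j => minpoly L (ω ^ (b + j)))) = 0 := by
    obtain ⟨c, hc⟩ := Finset.dvd_lcm (f := fun j => minpoly L (ω ^ (b + j))) hj
    rw [hc, map_mul, minpoly.aeval, zero_mul]
  apply minpoly.dvd
  rw [map_pow, aeval_comp, map_pow, aeval_X]
  have hθk : θ ^ k = ψ θ := by
    rw [hψ, hθ, ← pow_mul, ← pow_mul]
    rw [← pow_mod_orderOf ω ((b + j) * k), ← pow_mod_orderOf ω ((b + j) * 2 ^ (2 * s)), hω]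
    congr 1
    exact Nat.ModEq.mul_left _ hkmod
  rw [hθk, aeval_algHom_apply, hPθ, map_zero]
  norm_num
end

section
/- (Binary BCH-dihedral codes have prescribed minimum distance.) Let L be a finite field with 4 elements containing an element α with α² + α + 1 = 0, let E be a finite field extension of L, let m ≥ 3 be odd, and let ω ∈ E have multiplicative order exactly m. Suppose there exists an integer s ≥ 0 with 2^{2s+1} ≡ −1 (mod m). Let b ≥ 0 and δ with 2 ≤ δ ≤ m + 1, and set p = lcm{ M_{ω^b}, M_{ω^{b+1}}, …, M_{ω^{b+δ−2}} } ∈ L[x], where M_{ω^j} is the minimal polynomial of ω^j over L, and set P = α · ( p(x^{(m−1)/2}) )² ∈ L[x]. Then for all t₁, t₂ ∈ L[x], the remainder c of t₁·p + t₂·P upon division by x^m − 1 satisfies: if c ≠ 0 then c has at least δ nonzero coefficients. In particular, the binary dihedral code of length 2m generated by p has minimum distance at least δ. -/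
open Polynomial

lemma charL_two (L : Type*) [Field L] [Fintype L] (hcard : Fintype.card L = 4) : CharP L 2 := by
  have h4 : ((4 : ℕ) : L) = 0 := by
    have := Nat.cast_card_eq_zero L
    rwa [hcard] at this
  have hdvd : ringChar L ∣ 4 := ringChar.dvd h4
  have hprime : (ringChar L).Prime := CharP.char_is_prime L (ringChar L)
  have h2 : ringChar L = 2 := by
    have : ringChar L ∣ 2 := hprime.dvd_of_dvd_pow (n := 2)
      (by norm_num at hdvd ⊢; exact hdvd : ringChar L ∣ 2 ^ 2)
    exact (Nat.prime_dvd_prime_iff_eq hprime Nat.prime_two).mp this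
  exact h2 ▸ ringChar.charP L

lemma aeval_pow_four_pow {L E : Type*} [Field L] [Field E] [Algebra L E] [Fintype L]
    (hcard : Fintype.card L = 4) (f : L[X]) (z : E) (s : ℕ) :
    aeval (z ^ 4 ^ s) f = (aeval z f) ^ 4 ^ s := by
  haveI : CharP L 2 := charL_two L hcard
  haveI : CharP E 2 := charP_of_injective_algebraMap (algebraMap L E).injective 2
  have key : ∀ w : E, aeval (w ^ 4) f = (aeval w f) ^ 4 := by
    intro w
    let φ : E →ₐ[L] E :=
      { toRingHom := (frobenius E 2).comp (frobenius E 2)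
        commutes' := fun a => by
          show frobenius E 2 (frobenius E 2 (algebraMap L E a)) = algebraMap L E a
          simp only [frobenius_def]
          rw [← pow_mul, ← map_pow]
          congr 1
          have := FiniteField.pow_card a
          rwa [hcard] at this }
    have hφ : ∀ x : E, φ x = x ^ 4 := fun x => by
      show (x ^ 2) ^ 2 = x ^ 4
      rw [← pow_mul]
    have := aeval_algHom_apply φ w f
    rwa [hφ, hφ] at this
  induction s with
  | zero => simp
  | succ s ih =>
    have h1 : z ^ 4 ^ (s + 1) = (z ^ 4 ^ s) ^ 4 := by rw [← pow_mul, pow_succ]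
    rw [h1, key, ih, ← pow_mul, ← pow_succ]

/-- (Binary BCH-dihedral codes have prescribed minimum distance.) With
`L = F_4 = F_2[α]`, `ω` of order `m` (`m ≥ 3` odd) in a finite extension `E`,
`2^{2s+1} ≡ −1 (mod m)` for some `s`, `p = lcm{M_{ω^b}, …, M_{ω^{b+δ−2}}}` and
`P = α·(p(x^{(m−1)/2}))²`, every nonzero folded codeword
`t₁·p + t₂·P mod (x^m − 1)` has at least `δ` nonzero coefficients; hence the
binary dihedral code of length `2m` generated by `p` has minimum distance at
least `δ`. -/
theorem binary_bch_dihedral_minimum_distance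
    (L E : Type*) [Field L] [Field E] [Algebra L E] [DecidableEq L]
    [Fintype L] [Fintype E] (hcard : Fintype.card L = 4)
    (α : L) (hα : α ^ 2 + α + 1 = 0)
    (m : ℕ) (hm : 3 ≤ m) (hodd : Odd m)
    (ω : E) (hω : orderOf ω = m)
    (hs : ∃ s : ℕ, (2 : ZMod m) ^ (2 * s + 1) = -1)
    (b : ℕ) (δ : ℕ) (hδ2 : 2 ≤ δ) (hδm : δ ≤ m + 1)
    (p P : L[X])
    (hp : p = (Finset.range (δ - 1)).lcm (fun j => minpoly L (ω ^ (b + j))))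
    (hP : P = C α * (p.comp (X ^ ((m - 1) / 2))) ^ 2) :
    ∀ t₁ t₂ : L[X],
      (t₁ * p + t₂ * P) %ₘ (X ^ m - 1) ≠ 0 →
        δ ≤ ((t₁ * p + t₂ * P) %ₘ (X ^ m - 1)).support.card := by
  intro t₁ t₂ hne
  set c := (t₁ * p + t₂ * P) %ₘ (X ^ m - 1) with hc
  by_contra hlt
  push_neg at hlt
  obtain ⟨s, hs⟩ := hs
  have hm0 : m ≠ 0 := by omega
  haveI : NeZero m := ⟨hm0⟩
  have hmonic : (X ^ m - 1 : L[X]).Monic := by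
    simpa using monic_X_pow_sub_C (1 : L) hm0
  have hω1 : ω ^ m = 1 := hω ▸ pow_orderOf_eq_one ω
  have hωne : ω ≠ 0 := by
    intro h
    rw [h, zero_pow hm0] at hω1
    exact zero_ne_one hω1
  -- degree bound on c
  have hdeg : c.degree < (m : WithBot ℕ) := by
    have := degree_modByMonic_lt (t₁ * p + t₂ * P) hmonic
    rw [← hc] at this
    rwa [show (X ^ m - 1 : L[X]) = X ^ m - C 1 by rw [map_one],
      degree_X_pow_sub_C (by omega) (1 : L)] at this
  have hsup : ∀ k ∈ c.support, k < m := by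
    intro k hk
    have h1 : (k : WithBot ℕ) ≤ c.degree := le_degree_of_ne_zero (mem_support_iff.mp hk)
    exact_mod_cast lt_of_le_of_lt h1 hdeg
  -- the congruence (m-1)/2 ≡ 4^s [MOD m]
  have hcong : (m - 1) / 2 ≡ 4 ^ s [MOD m] := by
    rw [← ZMod.natCast_eq_natCast_iff]
    have h2u : IsUnit (2 : ZMod m) := by
      have : IsUnit ((2 : ℕ) : ZMod m) := (ZMod.isUnit_iff_coprime 2 m).mpr
        (Nat.coprime_two_left.mpr hodd)
      simpa using this
    apply h2u.mul_left_cancel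
    have hhalf : 2 * ((m - 1) / 2) = m - 1 := by
      obtain ⟨t, ht⟩ := hodd
      omega
    have e1 : (2 : ZMod m) * ((((m - 1) / 2 : ℕ)) : ZMod m) = ((m - 1 : ℕ) : ZMod m) := by
      rw [show (2 : ZMod m) = ((2 : ℕ) : ZMod m) by push_cast; ring, ← Nat.cast_mul, hhalf]
    have e2 : ((m - 1 : ℕ) : ZMod m) = -1 := by
      have : ((m - 1 : ℕ) : ZMod m) + 1 = 0 := by
        rw [show ((1 : ZMod m) = ((1:ℕ) : ZMod m)) by push_cast; ring, ← Nat.cast_add,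
          show m - 1 + 1 = m by omega, ZMod.natCast_self]
      linear_combination this
    have e3 : (2 : ZMod m) * (((4 ^ s : ℕ)) : ZMod m) = -1 := by
      push_cast
      rw [show (4 : ZMod m) = 2 ^ 2 by norm_num, ← pow_mul, mul_comm (2 : ZMod m), ← pow_succ]
      exact hs
    rw [e1, e2, e3]
  -- power equality iff congruence mod m
  set u : Eˣ := Units.mk0 ω hωne with hu
  have hord : orderOf u = m := by
    rw [← hω, ← orderOf_units]
    rfl
  have hpowiff : ∀ a a' : ℕ, ω ^ a = ω ^ a' ↔ a ≡ a' [MOD m] := by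
    intro a a'
    rw [← hord, ← pow_eq_pow_iff_modEq (x := u), Units.ext_iff, Units.val_pow_eq_pow_val,
      Units.val_pow_eq_pow_val]
    rfl
  -- roots of c
  have hroot : ∀ j, j < δ - 1 → aeval (ω ^ (b + j)) c = 0 := by
    intro j hj
    have hpz : aeval (ω ^ (b + j)) p = 0 := by
      have hdvd : minpoly L (ω ^ (b + j)) ∣ p := hp ▸ Finset.dvd_lcm (Finset.mem_range.mpr hj)
      exact aeval_eq_zero_of_dvd_aeval_eq_zero hdvd (minpoly.aeval L _)
    have hcomp : aeval (ω ^ (b + j)) (p.comp (X ^ ((m - 1) / 2))) = 0 := by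
      rw [aeval_comp]
      have h1 : aeval (ω ^ (b + j)) ((X : L[X]) ^ ((m - 1) / 2))
          = ω ^ ((b + j) * ((m - 1) / 2)) := by
        rw [map_pow, aeval_X, ← pow_mul]
      rw [h1]
      have h2 : ω ^ ((b + j) * ((m - 1) / 2)) = (ω ^ (b + j)) ^ 4 ^ s := by
        rw [← pow_mul, hpowiff]
        exact hcong.mul_left (b + j)
      rw [h2, aeval_pow_four_pow hcard, hpz, zero_pow (by positivity)]
    have hPz : aeval (ω ^ (b + j)) P = 0 := by
      rw [hP, map_mul, map_pow, hcomp]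
      ring
    have hXm : aeval (ω ^ (b + j)) ((X : L[X]) ^ m - 1) = 0 := by
      rw [map_sub, map_pow, aeval_X, map_one, ← pow_mul, mul_comm, pow_mul, hω1, one_pow,
        sub_self]
    rw [hc, modByMonic_eq_sub_mul_div _ (X ^ m - 1), map_sub, map_mul, hXm, map_add, map_mul,
      map_mul, hpz, hPz]
    ring
  -- Vandermonde argument
  set n := c.support.card with hn
  have hnδ : n ≤ δ - 1 := by omega
  let e : Fin n ≃ {x // x ∈ c.support} := c.support.equivFin.symm
  let f : Fin n → E := fun i => ω ^ ((e i : ℕ))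
  let v : Fin n → E := fun i => algebraMap L E (c.coeff (e i)) * ω ^ (b * (e i : ℕ))
  have hfinj : Function.Injective f := by
    intro i j hij
    have h1 : ((e i : ℕ)) ≡ ((e j : ℕ)) [MOD m] := (hpowiff _ _).mp hij
    have ki := hsup _ (e i).2
    have kj := hsup _ (e j).2
    have h2 : ((e i : ℕ)) = ((e j : ℕ)) := by
      unfold Nat.ModEq at h1
      rwa [Nat.mod_eq_of_lt ki, Nat.mod_eq_of_lt kj] at h1
    exact e.injective (Subtype.ext h2)
  have hzero : ∀ r : Fin n, (∑ i : Fin n, v i * f i ^ (r : ℕ)) = 0 := by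
    intro r
    have hr := hroot r (lt_of_lt_of_le r.2 hnδ)
    have hsum : aeval (ω ^ (b + (r : ℕ))) c
        = ∑ k ∈ c.support, algebraMap L E (c.coeff k) * (ω ^ (b + (r : ℕ))) ^ k := by
      rw [aeval_def, eval₂_eq_sum, Polynomial.sum_def]
    rw [hsum] at hr
    calc (∑ i : Fin n, v i * f i ^ (r : ℕ))
        = ∑ i : Fin n,
            algebraMap L E (c.coeff (e i)) * (ω ^ (b + (r : ℕ))) ^ ((e i : ℕ)) := by
          apply Finset.sum_congr rfl
          intro i _
          show algebraMap L E (c.coeff (e i)) * ω ^ (b * (e i : ℕ)) * (ω ^ ((e i : ℕ))) ^ (r : ℕ)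
              = algebraMap L E (c.coeff (e i)) * (ω ^ (b + (r : ℕ))) ^ ((e i : ℕ))
          rw [← pow_mul, ← pow_mul, mul_assoc, ← pow_add]
          congr 2
          ring
      _ = ∑ x : {x // x ∈ c.support},
            algebraMap L E (c.coeff x) * (ω ^ (b + (r : ℕ))) ^ (x : ℕ) :=
          Equiv.sum_comp e
            (fun x : {x // x ∈ c.support} =>
              algebraMap L E (c.coeff x) * (ω ^ (b + (r : ℕ))) ^ (x : ℕ))
      _ = ∑ k ∈ c.support, algebraMap L E (c.coeff k) * (ω ^ (b + (r : ℕ))) ^ k :=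
          Finset.sum_coe_sort c.support
            (fun k => algebraMap L E (c.coeff k) * (ω ^ (b + (r : ℕ))) ^ k)
      _ = 0 := hr
  have hv0 : v = 0 := Matrix.eq_zero_of_forall_pow_sum_mul_pow_eq_zero hfinj hzero
  have hn1 : 0 < n := Finset.card_pos.mpr (support_nonempty.mpr hne)
  have hvi := congrFun hv0 ⟨0, hn1⟩
  simp only [Pi.zero_apply] at hvi
  rcases mul_eq_zero.mp hvi with h | h
  · exact mem_support_iff.mp (e ⟨0, hn1⟩).2
      ((map_eq_zero_iff (algebraMap L E) (algebraMap L E).injective).mp h)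
  · exact pow_ne_zero _ hωne h
end
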